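/- Let G be a graph, I = {v_1, …, v_k} an independent set in G of size k, D = V(G) × [k] × [3], and M = M_hp the block matrix built from G as in the construction (blocks M_start, M_end, M_bij, 0, Id as specified). Then the composed relation R = H^M_{D[v_1,1],D[v_1,1]} ∘ H^M_{D[v_1,1],D[v_2,2]} ∘ ⋯ ∘ H^M_{D[v_{k-1},k-1],D[v_k,k]} ∘ H^M_{D[v_k,k],D[v_k,k]} equals {((v_1,1,c),(v_k,k,c')) : c,c' ∈ [3]} \ {((v_1,1,3),(v_k,k,1))}, which is not rectangular. -/

import Mathlib

inductive Entry | zero | one | star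
deriving DecidableEq

def Rectangular {α β : Type*} (R : Set (α × β)) : Prop :=
  ∀ i j i' j', (i, i') ∈ R → (i, j') ∈ R → (j, i') ∈ R → (j, j') ∈ R

def comp {α β γ : Type*} (R : Set (α × β)) (S : Set (β × γ)) : Set (α × γ) :=
  {p | ∃ b, (p.1, b) ∈ R ∧ (b, p.2) ∈ S}

def compList {α : Type*} : List (Set (α × α)) → Set (α × α)
  | [] => {p | p.1 = p.2}
  | R :: rest => comp R (compList rest)

def H {D : Type*} (M : D → D → Entry) (X Y : Set D) : Set (D × D) :=
  {p | p.1 ∈ X ∧ p.2 ∈ Y ∧ M p.1 p.2 = Entry.star}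

def Mstart : Fin 3 → Fin 3 → Entry :=
  ![![.star, .star, .zero], ![.star, .star, .zero], ![.zero, .zero, .star]]

def Mend : Fin 3 → Fin 3 → Entry :=
  ![![.star, .zero, .zero], ![.zero, .star, .star], ![.zero, .star, .star]]

def Mbij : Fin 3 → Fin 3 → Entry :=
  ![![.star, .zero, .zero], ![.zero, .star, .zero], ![.zero, .zero, .star]]

def Id3 : Fin 3 → Fin 3 → Entry :=
  ![![.one, .zero, .zero], ![.zero, .one, .zero], ![.zero, .zero, .one]]

/-- The block matrix `M` built from `G` in the NP-hardness construction. -/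
def Mmat {n k : ℕ} (G : SimpleGraph (Fin n)) [DecidableRel G.Adj] :
    (Fin n × Fin k × Fin 3) → (Fin n × Fin k × Fin 3) → Entry :=
  fun p q =>
    if p.1 = q.1 ∧ p.2.1 = q.2.1 then
      (if p.2.1.val = 0 then Mstart p.2.2 q.2.2
       else if p.2.1.val = k - 1 then Mend p.2.2 q.2.2
       else Mbij p.2.2 q.2.2)
    else if p.1 ≠ q.1 ∧ ¬ G.Adj p.1 q.1 ∧
            (q.2.1.val = p.2.1.val + 1 ∨ p.2.1.val = q.2.1.val + 1) then
      Mbij p.2.2 q.2.2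
    else if p.1 ≠ q.1 ∧ ¬ G.Adj p.1 q.1 ∧
            (p.2.1.val + 1 < q.2.1.val ∨ q.2.1.val + 1 < p.2.1.val) then
      Entry.zero
    else Id3 p.2.2 q.2.2

/-- `D[v,j]`: the three domain elements `(v,j,c)`, `c ∈ [3]`. -/
def Dset {n k : ℕ} (v : Fin n) (j : Fin k) : Set (Fin n × Fin k × Fin 3) :=
  {p | p.1 = v ∧ p.2.1 = j}


lemma comp_assoc {α β γ δ : Type*} (R : Set (α×β)) (S : Set (β×γ)) (T : Set (γ×δ)) :
    comp (comp R S) T = comp R (comp S T) := by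
  ext p; constructor
  · rintro ⟨c, ⟨b, hb, hc⟩, ht⟩; exact ⟨b, hb, c, hc, ht⟩
  · rintro ⟨b, hb, c, hc, ht⟩; exact ⟨c, ⟨b, hb, hc⟩, ht⟩

lemma comp_diag {α : Type*} (R : Set (α×α)) : comp R {p | p.1 = p.2} = R := by
  ext p; constructor
  · rintro ⟨b, hb, h⟩
    simp only [Set.mem_setOf_eq] at h
    rwa [h] at hb
  · intro h; exact ⟨p.2, h, rfl⟩

lemma diag_comp {α : Type*} (R : Set (α×α)) : comp {p : α×α | p.1 = p.2} R = R := by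
  ext p; constructor
  · rintro ⟨b, hb, h⟩
    simp only [Set.mem_setOf_eq] at hb
    rwa [← hb] at h
  · intro h; exact ⟨p.1, rfl, h⟩

lemma compList_append {α : Type*} (L L' : List (Set (α×α))) :
    compList (L ++ L') = comp (compList L) (compList L') := by
  induction L with
  | nil => simp [compList, diag_comp]
  | cons A L ih => simp [compList, ih, comp_assoc]

lemma compList_chain {α : Type*} :
    ∀ (m : ℕ), 0 < m → ∀ (X : ℕ → Fin 3 → α), (∀ i, Function.Injective (X i)) →
      compList ((List.finRange m).map
        (fun i : Fin m => {p : α × α | ∃ c, p = (X i.val c, X (i.val+1) c)})) =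
      {p : α × α | ∃ c, p = (X 0 c, X m c)} := by
  intro m
  induction m with
  | zero => omega
  | succ m ih =>
    intro _ X hX
    rw [List.finRange_succ]
    simp only [List.map_cons, List.map_map, compList, Fin.val_zero]
    rcases Nat.eq_zero_or_pos m with h0 | hm
    · subst h0
      simp only [List.finRange_zero, List.map_nil, compList, comp_diag]
    · have := ih hm (fun n => X (n+1)) (fun i => hX (i+1))
      simp only [Function.comp_def, Fin.val_succ] at this ⊢
      norm_num at this ⊢
      rw [this]
      ext p
      constructor
      · rintro ⟨b, ⟨c, hc⟩, ⟨c', hc'⟩⟩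
        simp only [Prod.mk.injEq] at hc hc'
        obtain ⟨h1, h2⟩ := hc
        obtain ⟨h3, h4⟩ := hc'
        have : c = c' := hX 1 (by rw [← h2, h3])
        subst this
        exact ⟨c, Prod.ext h1 h4⟩
      · rintro ⟨c, hc⟩
        rw [Prod.ext_iff] at hc
        exact ⟨X 1 c, ⟨c, Prod.ext hc.1 rfl⟩, ⟨c, Prod.ext rfl hc.2⟩⟩

lemma Mmat_diag {n k : ℕ} (G : SimpleGraph (Fin n)) [DecidableRel G.Adj]
    (w : Fin n) (j : Fin k) (c c' : Fin 3) :
    Mmat (k := k) G (w, j, c) (w, j, c') =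
      (if j.val = 0 then Mstart c c' else if j.val = k - 1 then Mend c c'
       else Mbij c c') := by
  simp [Mmat]

lemma Mmat_step {n k : ℕ} (G : SimpleGraph (Fin n)) [DecidableRel G.Adj]
    (w w' : Fin n) (j j' : Fin k) (c c' : Fin 3)
    (hw : w ≠ w') (hadj : ¬ G.Adj w w') (hj : j'.val = j.val + 1) :
    Mmat (k := k) G (w, j, c) (w', j', c') = Mbij c c' := by
  simp only [Mmat]
  rw [if_neg (by simp [hw]), if_pos ⟨hw, hadj, Or.inl hj⟩]

lemma Hstart_eq {n k : ℕ} (G : SimpleGraph (Fin n)) [DecidableRel G.Adj]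
    (w : Fin n) (j : Fin k) (hj : j.val = 0) :
    H (Mmat (k := k) G) (Dset w j) (Dset w j) =
      {p | ∃ c c' : Fin 3, p = ((w, j, c), (w, j, c')) ∧ Mstart c c' = Entry.star} := by
  ext ⟨⟨a, b, c⟩, ⟨a', b', c'⟩⟩
  simp only [H, Dset, Set.mem_setOf_eq, Prod.mk.injEq]
  constructor
  · rintro ⟨⟨rfl, rfl⟩, ⟨rfl, rfl⟩, hm⟩
    refine ⟨c, c', ⟨⟨rfl, rfl, rfl⟩, rfl, rfl, rfl⟩, ?_⟩
    rwa [Mmat_diag, if_pos hj] at hm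
  · rintro ⟨c0, c0', ⟨⟨rfl, rfl, rfl⟩, rfl, rfl, rfl⟩, hm⟩
    refine ⟨⟨rfl, rfl⟩, ⟨rfl, rfl⟩, ?_⟩
    rwa [Mmat_diag, if_pos hj]

lemma Hend_eq {n k : ℕ} (G : SimpleGraph (Fin n)) [DecidableRel G.Adj]
    (w : Fin n) (j : Fin k) (hj : j.val = k - 1) (hj0 : ¬ j.val = 0) :
    H (Mmat (k := k) G) (Dset w j) (Dset w j) =
      {p | ∃ c c' : Fin 3, p = ((w, j, c), (w, j, c')) ∧ Mend c c' = Entry.star} := by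
  ext ⟨⟨a, b, c⟩, ⟨a', b', c'⟩⟩
  simp only [H, Dset, Set.mem_setOf_eq, Prod.mk.injEq]
  constructor
  · rintro ⟨⟨rfl, rfl⟩, ⟨rfl, rfl⟩, hm⟩
    refine ⟨c, c', ⟨⟨rfl, rfl, rfl⟩, rfl, rfl, rfl⟩, ?_⟩
    rwa [Mmat_diag, if_neg hj0, if_pos hj] at hm
  · rintro ⟨c0, c0', ⟨⟨rfl, rfl, rfl⟩, rfl, rfl, rfl⟩, hm⟩
    refine ⟨⟨rfl, rfl⟩, ⟨rfl, rfl⟩, ?_⟩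
    rwa [Mmat_diag, if_neg hj0, if_pos hj]

lemma Mbij_star_iff : ∀ c c' : Fin 3, (Mbij c c' = Entry.star ↔ c = c') := by decide

lemma Hstep_eq {n k : ℕ} (G : SimpleGraph (Fin n)) [DecidableRel G.Adj]
    (w w' : Fin n) (j j' : Fin k) (hw : w ≠ w') (hadj : ¬ G.Adj w w')
    (hj : j'.val = j.val + 1) :
    H (Mmat (k := k) G) (Dset w j) (Dset w' j') =
      {p | ∃ c : Fin 3, p = ((w, j, c), (w', j', c))} := by
  ext ⟨⟨a, b, c⟩, ⟨a', b', c'⟩⟩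
  simp only [H, Dset, Set.mem_setOf_eq, Prod.mk.injEq]
  constructor
  · rintro ⟨⟨rfl, rfl⟩, ⟨rfl, rfl⟩, hm⟩
    rw [Mmat_step G _ _ _ _ _ _ hw hadj hj, Mbij_star_iff] at hm
    exact ⟨c, ⟨rfl, rfl, rfl⟩, rfl, rfl, hm.symm⟩
  · rintro ⟨c0, ⟨rfl, rfl, rfl⟩, rfl, rfl, rfl⟩
    exact ⟨⟨rfl, rfl⟩, ⟨rfl, rfl⟩, by rw [Mmat_step G _ _ _ _ _ _ hw hadj hj, Mbij_star_iff]⟩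

lemma compList_cons {α : Type*} (a : Set (α×α)) (l : List (Set (α×α))) :
    compList (a :: l) = comp a (compList l) := rfl

lemma compList_singleton {α : Type*} (a : Set (α×α)) : compList [a] = a := by
  rw [compList_cons, show compList ([] : List (Set (α×α))) = {p | p.1 = p.2} from rfl,
    comp_diag]

lemma startend_iff : ∀ c c' : Fin 3,
    ((∃ c'' : Fin 3, Mstart c c'' = Entry.star ∧ Mend c'' c' = Entry.star) ↔
      ¬(c = 2 ∧ c' = 0)) := by decide

theorem independent_set_gives_nonrectangular_chain {n k : ℕ} (hk : 2 ≤ k)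
    (G : SimpleGraph (Fin n)) [DecidableRel G.Adj]
    (v : Fin k → Fin n) (hinj : Function.Injective v)
    (hind : ∀ i i' : Fin k, ¬ G.Adj (v i) (v i')) :
    let M := Mmat (k := k) G
    let j0 : Fin k := ⟨0, by omega⟩
    let jl : Fin k := ⟨k - 1, by omega⟩
    let R := compList (
      [H M (Dset (v j0) j0) (Dset (v j0) j0)] ++
      (List.finRange (k - 1)).map (fun i =>
        H M (Dset (v ⟨i.val, by have := i.isLt; omega⟩) ⟨i.val, by have := i.isLt; omega⟩)
            (Dset (v ⟨i.val + 1, by have := i.isLt; omega⟩)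
                  ⟨i.val + 1, by have := i.isLt; omega⟩)) ++
      [H M (Dset (v jl) jl) (Dset (v jl) jl)])
    R = {p : (Fin n × Fin k × Fin 3) × (Fin n × Fin k × Fin 3) |
            ∃ c c' : Fin 3, p = ((v j0, j0, c), (v jl, jl, c'))} \
          {((v j0, j0, (2 : Fin 3)), (v jl, jl, (0 : Fin 3)))} ∧
      ¬ Rectangular R := by
  intro M j0 jl R
  -- abbreviations
  set A : Fin 3 → (Fin n × Fin k × Fin 3) := fun c => (v j0, j0, c) with hA
  set B : Fin 3 → (Fin n × Fin k × Fin 3) := fun c => (v jl, jl, c) with hB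
  have hAinj : Function.Injective A := by
    intro c c' h
    exact congrArg (fun p => p.2.2) h
  have hBinj : Function.Injective B := by
    intro c c' h
    exact congrArg (fun p => p.2.2) h
  -- the X-chain
  set X : ℕ → Fin 3 → (Fin n × Fin k × Fin 3) :=
    fun i c => if h : i < k then (v ⟨i, h⟩, ⟨i, h⟩, c) else A c with hXdef
  have hXinj : ∀ i, Function.Injective (X i) := by
    intro i c c' h
    have h2 := congrArg (fun p => p.2.2) h
    simp only [X] at h2
    split at h2 <;> exact h2
  have hX0 : X 0 = A := by
    funext c
    simp only [X]
    rw [dif_pos (by omega : (0:ℕ) < k)]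
  have hXl : X (k - 1) = B := by
    funext c
    simp only [X]
    rw [dif_pos (by omega : k - 1 < k)]
  -- the middle chain
  have hmid : compList ((List.finRange (k - 1)).map (fun i =>
        H M (Dset (v ⟨i.val, by have := i.isLt; omega⟩) ⟨i.val, by have := i.isLt; omega⟩)
            (Dset (v ⟨i.val + 1, by have := i.isLt; omega⟩)
                  ⟨i.val + 1, by have := i.isLt; omega⟩))) =
      {p | ∃ c : Fin 3, p = (A c, B c)} := by
    have hcongr : ∀ i ∈ List.finRange (k - 1),
        H M (Dset (v ⟨i.val, by have := i.isLt; omega⟩) ⟨i.val, by have := i.isLt; omega⟩)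
            (Dset (v ⟨i.val + 1, by have := i.isLt; omega⟩)
                  ⟨i.val + 1, by have := i.isLt; omega⟩) =
        {p | ∃ c : Fin 3, p = (X i.val c, X (i.val + 1) c)} := by
      intro i _
      have h1 : i.val < k := by have := i.isLt; omega
      have h2 : i.val + 1 < k := by have := i.isLt; omega
      have e1 : X i.val = fun c => (v ⟨i.val, h1⟩, (⟨i.val, h1⟩ : Fin k), c) := by
        funext c; simp only [X]; rw [dif_pos h1]
      have e2 : X (i.val + 1) = fun c => (v ⟨i.val + 1, h2⟩, (⟨i.val + 1, h2⟩ : Fin k), c) := by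
        funext c; simp only [X]; rw [dif_pos h2]
      rw [Hstep_eq G _ _ _ _ (fun he => by
            have := hinj he
            have := congrArg Fin.val this
            simp at this)
          (hind _ _) rfl]
      simp only [e1, e2]
    rw [List.map_congr_left hcongr,
      compList_chain (k - 1) (by omega) X hXinj, hX0, hXl]
  -- unfold R
  have hR : R = comp (H M (Dset (v j0) j0) (Dset (v j0) j0))
      (comp ({p | ∃ c : Fin 3, p = (A c, B c)})
        (H M (Dset (v jl) jl) (Dset (v jl) jl))) := by
    show compList _ = _
    rw [List.singleton_append, List.cons_append, compList_cons, compList_append, hmid, compList_singleton]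
  -- compute the block relations
  have hj0v : (j0 : Fin k).val = 0 := rfl
  have hjlv : (jl : Fin k).val = k - 1 := rfl
  have hjl0 : ¬ (jl : Fin k).val = 0 := by rw [hjlv]; omega
  rw [Hstart_eq G (v j0) j0 hj0v, Hend_eq G (v jl) jl hjlv hjl0] at hR
  -- final computation
  have hRfin : R = {p | ∃ c c' : Fin 3, p = (A c, B c') ∧ ¬(c = 2 ∧ c' = 0)} := by
    rw [hR]
    ext p
    constructor
    · rintro ⟨b, ⟨c, c1, hp1, hs⟩, b2, ⟨c2, hb2⟩, c3, c4, hb3, he⟩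
      simp only [Prod.mk.injEq] at hp1 hb2 hb3
      have hc12 : c1 = c2 := congrArg (fun p => p.2.2) (hp1.2.symm.trans hb2.1)
      have hc23 : c2 = c3 := congrArg (fun p => p.2.2) (hb2.2.symm.trans hb3.1)
      refine ⟨c, c4, Prod.ext hp1.1 hb3.2, ?_⟩
      rw [← startend_iff]
      exact ⟨c1, hs, by rw [hc12, hc23]; exact he⟩
    · rintro ⟨c, c', rfl, hne⟩
      obtain ⟨c'', hs, he⟩ := (startend_iff c c').mpr hne
      exact ⟨A c'', ⟨c, c'', rfl, hs⟩, B c'', ⟨c'', rfl⟩, c'', c', rfl, he⟩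
  have hmain : R = {p : (Fin n × Fin k × Fin 3) × (Fin n × Fin k × Fin 3) |
            ∃ c c' : Fin 3, p = ((v j0, j0, c), (v jl, jl, c'))} \
          {((v j0, j0, (2 : Fin 3)), (v jl, jl, (0 : Fin 3)))} := by
    rw [hRfin]
    ext p
    simp only [Set.mem_setOf_eq, Set.mem_diff, Set.mem_singleton_iff]
    constructor
    · rintro ⟨c, c', rfl, hne⟩
      refine ⟨⟨c, c', rfl⟩, fun h => hne ?_⟩
      rw [Prod.ext_iff] at h
      exact ⟨hAinj h.1, hBinj h.2⟩
    · rintro ⟨⟨c, c', rfl⟩, hne⟩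
      exact ⟨c, c', rfl, fun ⟨h1, h2⟩ => hne (by rw [h1, h2])⟩
  refine ⟨hmain, ?_⟩
  rw [hRfin]
  intro hrec
  have h1 : (A 0, B 1) ∈ {p | ∃ c c' : Fin 3, p = (A c, B c') ∧ ¬(c = 2 ∧ c' = 0)} :=
    ⟨0, 1, rfl, by decide⟩
  have h2 : (A 0, B 0) ∈ {p | ∃ c c' : Fin 3, p = (A c, B c') ∧ ¬(c = 2 ∧ c' = 0)} :=
    ⟨0, 0, rfl, by decide⟩
  have h3 : (A 2, B 1) ∈ {p | ∃ c c' : Fin 3, p = (A c, B c') ∧ ¬(c = 2 ∧ c' = 0)} :=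
    ⟨2, 1, rfl, by decide⟩
  obtain ⟨c, c', heq, hne⟩ := hrec (A 0) (A 2) (B 1) (B 0) h1 h2 h3
  simp only [Prod.mk.injEq] at heq
  exact hne ⟨(hAinj heq.1).symm, (hBinj heq.2).symm⟩
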